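/- Let 𝔽 be a perfect field of characteristic p > 0 and A = 𝔽[x₁,…,xₙ]. Let σ₀ be the twisted endomorphism with σ₀(x₁^{p-1}⋯xₙ^{p-1}) = 1 and σ₀ vanishing on all other monomials x₁^{m₁}⋯xₙ^{mₙ} for which some mᵢ + 1 is not divisible by p. Then for f ∈ A, the map f ∗ σ₀ : g ↦ σ₀(fg) is a Frobenius splitting of A if and only if the coefficient of x₁^{p-1}⋯xₙ^{p-1} in f is 1 and every other monomial x₁^{m₁}⋯xₙ^{mₙ} occurring in f with nonzero coefficient has some mᵢ + 1 not divisible by p. -/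

import Mathlib

open MvPolynomial

/-- In `A = 𝔽[x₁,…,xₙ]`, with `σ₀` the standard twisted endomorphism, the map
`f ∗ σ₀ : g ↦ σ₀ (f * g)` is a Frobenius splitting of `A` if and only if the coefficient
of `x₁^(p-1)⋯xₙ^(p-1)` in `f` is `1` and every other monomial `x₁^{m₁}⋯xₙ^{mₙ}` occurring
in `f` has some `mᵢ + 1` not divisible by `p`. -/
theorem stmt_9 {𝔽 : Type*} [Field 𝔽] (p : ℕ) (hp : p.Prime)
    [CharP 𝔽 p] [ExpChar 𝔽 p] [PerfectRing 𝔽 p] (n : ℕ)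
    (σ₀ : MvPolynomial (Fin n) 𝔽 → MvPolynomial (Fin n) 𝔽)
    (h0add : ∀ a b, σ₀ (a + b) = σ₀ a + σ₀ b)
    (h0tw : ∀ a b, σ₀ (a ^ p * b) = a * σ₀ b)
    (h0val : ∀ m : Fin n →₀ ℕ,
      σ₀ (monomial m 1) =
        if ∀ i, p ∣ m i + 1 then
          monomial (m.mapRange (fun k => (k + 1) / p - 1)
            (by simp [Nat.div_eq_of_lt hp.one_lt])) 1
        else 0)
    (f : MvPolynomial (Fin n) 𝔽) :
    let pm1 : Fin n →₀ ℕ := Finsupp.equivFunOnFinite.symm fun _ => p - 1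
    ((∀ a b, (fun g => σ₀ (f * g)) (a + b) = σ₀ (f * a) + σ₀ (f * b)) ∧
     (∀ a b, σ₀ (f * (a ^ p * b)) = a * σ₀ (f * b)) ∧
     σ₀ (f * 1) = 1)
    ↔
    (coeff pm1 f = 1 ∧
     ∀ m ∈ f.support, m ≠ pm1 → ∃ i, ¬ p ∣ m i + 1) := by
  intro pm1
  classical
  have hp1 : 1 < p := hp.one_lt
  set good : (Fin n →₀ ℕ) → Prop := fun m => ∀ i, p ∣ m i + 1 with hgood
  set φ : (Fin n →₀ ℕ) → (Fin n →₀ ℕ) := fun m =>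
    m.mapRange (fun k => (k + 1) / p - 1) (by simp [Nat.div_eq_of_lt hp.one_lt]) with hφ
  set r : (Fin n →₀ ℕ) → 𝔽 := fun m => (frobeniusEquiv 𝔽 p).symm (coeff m f) with hr
  have hrpow : ∀ c : 𝔽, ((frobeniusEquiv 𝔽 p).symm c) ^ p = c := by
    intro c
    have := (frobeniusEquiv 𝔽 p).apply_symm_apply c
    rwa [frobeniusEquiv_apply, frobenius_def] at this
  have hσ0 : σ₀ 0 = 0 := by
    have h := h0add 0 0
    rw [add_zero] at h
    exact left_eq_add.mp h
  have hσsum : ∀ (s : Finset (Fin n →₀ ℕ)) (g : (Fin n →₀ ℕ) → MvPolynomial (Fin n) 𝔽),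
      σ₀ (∑ m ∈ s, g m) = ∑ m ∈ s, σ₀ (g m) := by
    intro s g
    induction s using Finset.induction with
    | empty => simpa using hσ0
    | insert _ _ hns ih => rw [Finset.sum_insert hns, h0add, ih, Finset.sum_insert hns]
  have hφapp : ∀ (m : Fin n →₀ ℕ) i, φ m i = (m i + 1) / p - 1 := by
    intro m i
    simp [hφ, Finsupp.mapRange_apply]
  have hmono : ∀ (m : Fin n →₀ ℕ) (c : 𝔽),
      σ₀ (monomial m c) =
        if good m then monomial (φ m) ((frobeniusEquiv 𝔽 p).symm c) else 0 := by
    intro m c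
    have h1 : (monomial m c : MvPolynomial (Fin n) 𝔽)
        = (C ((frobeniusEquiv 𝔽 p).symm c)) ^ p * monomial m 1 := by
      rw [← map_pow, hrpow, C_mul_monomial, mul_one]
    rw [h1, h0tw, h0val]
    split_ifs with hg
    · rw [C_mul_monomial, mul_one]
    · rw [mul_zero]
  have key : σ₀ f = ∑ m ∈ f.support, if good m then monomial (φ m) (r m) else 0 := by
    conv_lhs => rw [f.as_sum]
    rw [hσsum]
    exact Finset.sum_congr rfl fun m _ => hmono m _
  have hcoeff : ∀ d, coeff d (σ₀ f)
      = ∑ m ∈ f.support, if good m ∧ φ m = d then r m else 0 := by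
    intro d
    rw [key, coeff_sum]
    refine Finset.sum_congr rfl fun m _ => ?_
    by_cases hg : good m
    · rw [if_pos hg, coeff_monomial]
      by_cases he : φ m = d
      · rw [if_pos he, if_pos ⟨hg, he⟩]
      · rw [if_neg he, if_neg (fun h => he h.2)]
    · rw [if_neg hg, if_neg (fun h => hg h.1), coeff_zero]
  have hrec : ∀ m, good m → ∀ i, m i + 1 = p * (φ m i + 1) := by
    intro m hm i
    obtain ⟨k, hk⟩ := hm i
    have hk0 : 0 < k := by
      rcases Nat.eq_zero_or_pos k with h | h
      · subst h; simp at hk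
      · exact h
    have hφk : φ m i = k - 1 := by
      rw [hφapp, hk, Nat.mul_div_cancel_left k (by omega : 0 < p)]
    rw [hk, hφk, Nat.sub_add_cancel hk0]
  have hinj : ∀ m m', good m → good m' → φ m = φ m' → m = m' := by
    intro m m' h h' he
    ext i
    have h1 := hrec m h i
    have h2 := hrec m' h' i
    have h3 : φ m i = φ m' i := by rw [he]
    rw [h3] at h1
    omega
  have hpm1 : ∀ i, pm1 i = p - 1 := fun i => rfl
  have hgoodpm1 : good pm1 := by
    intro i
    rw [hpm1]
    have : p - 1 + 1 = p := by omega
    rw [this]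
  have hφpm1 : φ pm1 = 0 := by
    ext i
    rw [hφapp, hpm1]
    have : p - 1 + 1 = p := by omega
    rw [this, Nat.div_self (by omega : 0 < p)]
    rfl
  have hsingle : ∀ m₀, good m₀ → coeff (φ m₀) (σ₀ f) = r m₀ := by
    intro m₀ hg
    rw [hcoeff]
    rw [Finset.sum_eq_single m₀]
    · rw [if_pos ⟨hg, rfl⟩]
    · intro b hb hne
      by_cases hgb : good b
      · have hne' : φ b ≠ φ m₀ := fun h => hne (hinj b m₀ hgb hg h)
        rw [if_neg (fun h => hne' h.2)]
      · rw [if_neg (fun h => hgb h.1)]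
    · intro hns
      have hc : coeff m₀ f = 0 := notMem_support_iff.mp hns
      rw [if_pos ⟨hg, rfl⟩, hr]
      simp [hc]
  constructor
  · rintro ⟨-, -, h1⟩
    rw [mul_one] at h1
    have hc0 : r pm1 = 1 := by
      have := hsingle pm1 hgoodpm1
      rw [h1, hφpm1] at this
      simpa using this.symm
    constructor
    · have : (frobeniusEquiv 𝔽 p).symm (coeff pm1 f) = (frobeniusEquiv 𝔽 p).symm 1 := by
        rw [map_one]; exact hc0
      exact (frobeniusEquiv 𝔽 p).symm.injective this
    · intro m₀ hm₀ hne
      by_contra hb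
      push_neg at hb
      have hg : good m₀ := hb
      have h := hsingle m₀ hg
      rw [h1] at h
      have hφne : (0 : Fin n →₀ ℕ) ≠ φ m₀ := by
        intro h0
        exact hne (hinj m₀ pm1 hg hgoodpm1 (h0.symm.trans hφpm1.symm))
      rw [coeff_one, if_neg hφne] at h
      have : coeff m₀ f = 0 := by
        have := congrArg (frobeniusEquiv 𝔽 p) h.symm
        rwa [RingEquiv.apply_symm_apply, map_zero] at this
      exact (mem_support_iff.mp hm₀) this
  · rintro ⟨h1, h2⟩
    refine ⟨fun a b => ?_, fun a b => ?_, ?_⟩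
    · show σ₀ (f * (a + b)) = _
      rw [mul_add, h0add]
    · have h3 : f * (a ^ p * b) = a ^ p * (f * b) := by ring
      rw [h3, h0tw]
    · rw [mul_one, key]
      have hmem : pm1 ∈ f.support := by
        rw [mem_support_iff, h1]; exact one_ne_zero
      rw [Finset.sum_eq_single_of_mem pm1 hmem]
      · rw [if_pos hgoodpm1, hφpm1]
        have : r pm1 = 1 := by rw [hr]; simp [h1]
        rw [this]
        simp
      · intro b hb hne
        rcases h2 b hb hne with ⟨i, hi⟩
        have : ¬ good b := fun hg => hi (hg i)
        rw [if_neg this]
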